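/- Let P, Q and μ be probability measures on a measurable space S. Suppose Q is absolutely continuous with respect to P with Radon–Nikodym density dQ/dP = e^D P-almost everywhere, for a measurable function D : S → ℝ, and suppose D is μ-integrable. Then the relative entropies satisfy I(μ|Q) = I(μ|P) − ∫ D dμ, in the sense that I(μ|Q) is finite if and only if I(μ|P) is finite, and in that case the equality of real numbers holds. -/

import Mathlib

open MeasureTheory
open scoped ENNReal

/-- The relative entropy `I(μ|ν)` defined by the variational formula
`I(μ|ν) = sup { ∫ φ dμ − log ∫ e^φ dν : φ bounded measurable }`, as an extended real. -/
noncomputable def relEntropy {S : Type*} [MeasurableSpace S] (μ ν : Measure S) : EReal :=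
  ⨆ φ ∈ {φ : S → ℝ | Measurable φ ∧ ∃ M : ℝ, ∀ x, |φ x| ≤ M},
    (((∫ x, φ x ∂μ) - Real.log (∫ x, Real.exp (φ x) ∂ν) : ℝ) : EReal)


open Filter Real
open scoped NNReal Topology
set_option linter.unusedSectionVars false

namespace RelEntropyAux

variable {S : Type*} [MeasurableSpace S]

/-- Truncation of `D` at level `n`. -/
noncomputable def trunc (D : S → ℝ) (n : ℕ) (x : S) : ℝ := max (-(n : ℝ)) (min (D x) n)

lemma trunc_meas {D : S → ℝ} (hD : Measurable D) (n : ℕ) : Measurable (trunc D n) :=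
  measurable_const.max (hD.min measurable_const)

lemma abs_trunc_le_abs (D : S → ℝ) (n : ℕ) (x : S) : |trunc D n x| ≤ |D x| := by
  rw [abs_le]
  constructor
  · exact le_max_of_le_right (le_min (neg_abs_le _) (le_trans (neg_nonpos_of_nonneg (abs_nonneg _)) (Nat.cast_nonneg n)))
  · exact max_le (le_trans (neg_nonpos_of_nonneg (Nat.cast_nonneg n)) (abs_nonneg _))
      (le_trans (min_le_left _ _) (le_abs_self _))

lemma abs_trunc_le_n (D : S → ℝ) (n : ℕ) (x : S) : |trunc D n x| ≤ n := by
  rw [abs_le]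
  exact ⟨le_max_left _ _, max_le (le_trans (neg_nonpos_of_nonneg (Nat.cast_nonneg n)) (Nat.cast_nonneg n)) (min_le_right _ _)⟩

lemma trunc_le_max (D : S → ℝ) (n : ℕ) (x : S) : trunc D n x ≤ max (D x) 0 :=
  max_le (le_max_of_le_right (neg_nonpos_of_nonneg (Nat.cast_nonneg n)))
    (le_max_of_le_left (min_le_left _ _))

lemma min_le_trunc (D : S → ℝ) (n : ℕ) (x : S) : min (D x) 0 ≤ trunc D n x :=
  le_max_of_le_right (le_min (min_le_left _ _) (le_trans (min_le_right _ _) (Nat.cast_nonneg n)))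

lemma tendsto_trunc (D : S → ℝ) (x : S) :
    Tendsto (fun n => trunc D n x) atTop (𝓝 (D x)) := by
  apply tendsto_atTop_of_eventually_const (i₀ := ⌈|D x|⌉₊)
  intro n hn
  have h : |D x| ≤ (n : ℝ) := le_trans (Nat.le_ceil _) (Nat.cast_le.2 hn)
  unfold trunc
  rw [min_eq_left (le_trans (le_abs_self _) h),
    max_eq_right (by linarith [neg_le_abs (D x)])]

lemma integrable_of_bounded (ν : Measure S) [IsFiniteMeasure ν] {g : S → ℝ}
    (hg : Measurable g) (M : ℝ) (hM : ∀ x, |g x| ≤ M) : Integrable g ν :=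
  (integrable_const M).mono' hg.aestronglyMeasurable
    (Filter.Eventually.of_forall fun x => by rw [Real.norm_eq_abs]; exact hM x)

end RelEntropyAux

namespace RelEntropyAux2

open RelEntropyAux

variable {S : Type*} [MeasurableSpace S]

lemma lintegral_expD (P : Measure S) [IsProbabilityMeasure P]
    {Q : Measure S} [IsProbabilityMeasure Q] {D : S → ℝ}
    (hQP : Q = P.withDensity (fun x => ENNReal.ofReal (Real.exp (D x)))) :
    ∫⁻ x, ENNReal.ofReal (Real.exp (D x)) ∂P = 1 := by
  have h := (measure_univ : Q Set.univ = 1)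
  rwa [hQP, withDensity_apply _ MeasurableSet.univ, setLIntegral_univ] at h

lemma integrable_expD (P : Measure S) [IsProbabilityMeasure P] {D : S → ℝ}
    (hD : Measurable D)
    (h1 : ∫⁻ x, ENNReal.ofReal (Real.exp (D x)) ∂P = 1) :
    Integrable (fun x => Real.exp (D x)) P := by
  refine ⟨(hD.exp).aestronglyMeasurable, ?_⟩
  have h2 : ∫⁻ a, ‖Real.exp (D a)‖ₑ ∂P = 1 := by
    rw [← h1]; congr 1; ext a; exact Real.enorm_eq_ofReal (Real.exp_pos _).le
  simp only [HasFiniteIntegral, h2]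
  exact ENNReal.one_lt_top

lemma integral_exp_withDensity (P : Measure S) {D : S → ℝ} (hD : Measurable D) (g : S → ℝ) :
    ∫ x, Real.exp (g x) ∂(P.withDensity fun x => ENNReal.ofReal (Real.exp (D x)))
      = ∫ x, Real.exp (D x + g x) ∂P := by
  have hmeas : Measurable fun x => (Real.exp (D x)).toNNReal := (hD.exp).real_toNNReal
  have heq : (fun x => ENNReal.ofReal (Real.exp (D x)))
      = fun x => (((Real.exp (D x)).toNNReal : ℝ≥0) : ℝ≥0∞) := rfl
  rw [heq, integral_withDensity_eq_integral_smul hmeas]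
  congr 1; ext x
  rw [NNReal.smul_def, Real.coe_toNNReal _ (Real.exp_pos _).le, smul_eq_mul, ← Real.exp_add]

end RelEntropyAux2

namespace Key

open RelEntropyAux RelEntropyAux2

variable {S : Type*} [MeasurableSpace S]

lemma key1 (P Q μ : Measure S) [IsProbabilityMeasure P] [IsProbabilityMeasure Q]
    [IsProbabilityMeasure μ] {D : S → ℝ} (hD : Measurable D)
    (hQP : Q = P.withDensity fun x => ENNReal.ofReal (Real.exp (D x)))
    (hint : Integrable D μ)
    {φ : S → ℝ} (hφ : Measurable φ) {M : ℝ} (hM : ∀ x, |φ x| ≤ M) {r : ℝ}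
    (hb : ∀ ψ : S → ℝ, Measurable ψ → (∃ N : ℝ, ∀ x, |ψ x| ≤ N) →
      (∫ x, ψ x ∂μ) - Real.log (∫ x, Real.exp (ψ x) ∂P) ≤ r) :
    (∫ x, φ x ∂μ) - Real.log (∫ x, Real.exp (φ x) ∂Q) + (∫ x, D x ∂μ) ≤ r := by
  have hexpD : Integrable (fun x => Real.exp (D x)) P :=
    integrable_expD P hD (lintegral_expD P hQP)
  have hQint : (∫ x, Real.exp (φ x) ∂Q) = ∫ x, Real.exp (φ x + D x) ∂P := by
    rw [hQP, integral_exp_withDensity P hD φ]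
    exact integral_congr_ae (Filter.Eventually.of_forall fun x =>
      show Real.exp (D x + φ x) = Real.exp (φ x + D x) by rw [add_comm])
  have hIlim : Integrable (fun x => Real.exp (φ x + D x)) P := by
    refine (hexpD.const_mul (Real.exp M)).mono' ((hφ.add hD).exp).aestronglyMeasurable
      (Filter.Eventually.of_forall fun x => ?_)
    rw [Real.norm_eq_abs, abs_of_pos (Real.exp_pos _), Real.exp_add]
    exact mul_le_mul_of_nonneg_right (Real.exp_le_exp.2 ((le_abs_self _).trans (hM x)))
      (Real.exp_pos _).le
  have hpos : 0 < ∫ x, Real.exp (φ x + D x) ∂P := integral_exp_pos hIlim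
  have htendI : Tendsto (fun n => ∫ x, Real.exp (φ x + trunc D n x) ∂P) atTop
      (𝓝 (∫ x, Real.exp (φ x + D x) ∂P)) := by
    refine tendsto_integral_of_dominated_convergence
      (fun x => Real.exp M * (Real.exp (D x) + 1))
      (fun n => ((hφ.add (trunc_meas hD n)).exp).aestronglyMeasurable)
      ((hexpD.add (integrable_const 1)).const_mul _)
      (fun n => Filter.Eventually.of_forall fun x => ?_)
      (Filter.Eventually.of_forall fun x =>
        (Real.continuous_exp.tendsto _).comp ((tendsto_trunc D x).const_add (φ x)))
    rw [Real.norm_eq_abs, abs_of_pos (Real.exp_pos _)]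
    have h1 : φ x + trunc D n x ≤ M + max (D x) 0 :=
      add_le_add ((le_abs_self _).trans (hM x)) (trunc_le_max D n x)
    calc Real.exp (φ x + trunc D n x) ≤ Real.exp (M + max (D x) 0) := Real.exp_le_exp.2 h1
      _ = Real.exp M * Real.exp (max (D x) 0) := Real.exp_add _ _
      _ ≤ Real.exp M * (Real.exp (D x) + 1) := by
          refine mul_le_mul_of_nonneg_left ?_ (Real.exp_pos _).le
          rcases le_total (D x) 0 with h | h
          · rw [max_eq_right h, Real.exp_zero]; linarith [Real.exp_pos (D x)]
          · rw [max_eq_left h]; linarith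
  have hlog : Tendsto (fun n => Real.log (∫ x, Real.exp (φ x + trunc D n x) ∂P)) atTop
      (𝓝 (Real.log (∫ x, Real.exp (φ x + D x) ∂P))) := htendI.log hpos.ne'
  have htendD : Tendsto (fun n => ∫ x, trunc D n x ∂μ) atTop (𝓝 (∫ x, D x ∂μ)) := by
    refine tendsto_integral_of_dominated_convergence (fun x => |D x|)
      (fun n => (trunc_meas hD n).aestronglyMeasurable) hint.abs
      (fun n => Filter.Eventually.of_forall fun x => by
        rw [Real.norm_eq_abs]; exact abs_trunc_le_abs D n x)
      (Filter.Eventually.of_forall fun x => tendsto_trunc D x)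
  have hs : Tendsto (fun n => (∫ x, (φ x + trunc D n x) ∂μ)
      - Real.log (∫ x, Real.exp (φ x + trunc D n x) ∂P)) atTop
      (𝓝 ((∫ x, φ x ∂μ) + (∫ x, D x ∂μ)
        - Real.log (∫ x, Real.exp (φ x + D x) ∂P))) := by
    refine ((htendD.const_add (∫ x, φ x ∂μ)).sub hlog).congr fun n => ?_
    rw [integral_add (integrable_of_bounded μ hφ M hM)
      (integrable_of_bounded μ (trunc_meas hD n) n (abs_trunc_le_n D n))]
  have hle : ∀ n, (∫ x, (φ x + trunc D n x) ∂μ)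
      - Real.log (∫ x, Real.exp (φ x + trunc D n x) ∂P) ≤ r := fun n =>
    hb _ (hφ.add (trunc_meas hD n)) ⟨M + n, fun x =>
      (abs_add_le _ _).trans (add_le_add (hM x) (abs_trunc_le_n D n x))⟩
  have hfin := le_of_tendsto' hs hle
  rw [hQint]; linarith

lemma key2 (P Q μ : Measure S) [IsProbabilityMeasure P] [IsProbabilityMeasure Q]
    [IsProbabilityMeasure μ] {D : S → ℝ} (hD : Measurable D)
    (hQP : Q = P.withDensity fun x => ENNReal.ofReal (Real.exp (D x)))
    (hint : Integrable D μ)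
    {ψ : S → ℝ} (hψ : Measurable ψ) {M : ℝ} (hM : ∀ x, |ψ x| ≤ M) {r : ℝ}
    (ha : ∀ φ : S → ℝ, Measurable φ → (∃ N : ℝ, ∀ x, |φ x| ≤ N) →
      (∫ x, φ x ∂μ) - Real.log (∫ x, Real.exp (φ x) ∂Q) ≤ r) :
    (∫ x, ψ x ∂μ) - Real.log (∫ x, Real.exp (ψ x) ∂P) - (∫ x, D x ∂μ) ≤ r := by
  have hexpD : Integrable (fun x => Real.exp (D x)) P :=
    integrable_expD P hD (lintegral_expD P hQP)
  have hQint : ∀ n : ℕ, (∫ x, Real.exp (ψ x - trunc D n x) ∂Q)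
      = ∫ x, Real.exp (D x + (ψ x - trunc D n x)) ∂P := fun n => by
    rw [hQP, integral_exp_withDensity P hD _]
  have hIψ : Integrable (fun x => Real.exp (ψ x)) P :=
    integrable_of_bounded P hψ.exp (Real.exp M) fun x => by
      rw [abs_of_pos (Real.exp_pos _)]
      exact Real.exp_le_exp.2 ((le_abs_self _).trans (hM x))
  have hpos : 0 < ∫ x, Real.exp (ψ x) ∂P := integral_exp_pos hIψ
  have htendI : Tendsto (fun n => ∫ x, Real.exp (D x + (ψ x - trunc D n x)) ∂P) atTop
      (𝓝 (∫ x, Real.exp (ψ x) ∂P)) := by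
    refine tendsto_integral_of_dominated_convergence
      (fun x => Real.exp M * (Real.exp (D x) + 1))
      (fun n => ((hD.add (hψ.sub (trunc_meas hD n))).exp).aestronglyMeasurable)
      ((hexpD.add (integrable_const 1)).const_mul _)
      (fun n => Filter.Eventually.of_forall fun x => ?_)
      (Filter.Eventually.of_forall fun x => ?_)
    · rw [Real.norm_eq_abs, abs_of_pos (Real.exp_pos _)]
      have hmin := min_le_trunc D n x
      have h0 : D x - trunc D n x ≤ max (D x) 0 := by
        rcases le_total (D x) 0 with h | h
        · rw [min_eq_left h] at hmin
          exact le_trans (by linarith) (le_max_right _ _)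
        · rw [min_eq_right h] at hmin
          exact le_trans (by linarith) (le_max_left _ _)
      have h1 : D x + (ψ x - trunc D n x) ≤ M + max (D x) 0 := by
        have h2 := (le_abs_self (ψ x)).trans (hM x); linarith
      calc Real.exp (D x + (ψ x - trunc D n x)) ≤ Real.exp (M + max (D x) 0) :=
            Real.exp_le_exp.2 h1
        _ = Real.exp M * Real.exp (max (D x) 0) := Real.exp_add _ _
        _ ≤ Real.exp M * (Real.exp (D x) + 1) := by
            refine mul_le_mul_of_nonneg_left ?_ (Real.exp_pos _).le
            rcases le_total (D x) 0 with h | h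
            · rw [max_eq_right h, Real.exp_zero]; linarith [Real.exp_pos (D x)]
            · rw [max_eq_left h]; linarith
    · have h2 : Tendsto (fun n => D x + (ψ x - trunc D n x)) atTop
          (𝓝 (D x + (ψ x - D x))) :=
        (tendsto_const_nhds.sub (tendsto_trunc D x)).const_add (D x)
      have h3 : D x + (ψ x - D x) = ψ x := by ring
      have h4 := (Real.continuous_exp.tendsto _).comp h2
      rw [h3] at h4
      exact h4
  have hlog : Tendsto (fun n => Real.log (∫ x, Real.exp (D x + (ψ x - trunc D n x)) ∂P))
      atTop (𝓝 (Real.log (∫ x, Real.exp (ψ x) ∂P))) := htendI.log hpos.ne'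
  have htendD : Tendsto (fun n => ∫ x, trunc D n x ∂μ) atTop (𝓝 (∫ x, D x ∂μ)) := by
    refine tendsto_integral_of_dominated_convergence (fun x => |D x|)
      (fun n => (trunc_meas hD n).aestronglyMeasurable) hint.abs
      (fun n => Filter.Eventually.of_forall fun x => by
        rw [Real.norm_eq_abs]; exact abs_trunc_le_abs D n x)
      (Filter.Eventually.of_forall fun x => tendsto_trunc D x)
  have ht : Tendsto (fun n => (∫ x, (ψ x - trunc D n x) ∂μ)
      - Real.log (∫ x, Real.exp (D x + (ψ x - trunc D n x)) ∂P)) atTop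
      (𝓝 ((∫ x, ψ x ∂μ) - (∫ x, D x ∂μ)
        - Real.log (∫ x, Real.exp (ψ x) ∂P))) := by
    refine ((htendD.const_sub (∫ x, ψ x ∂μ)).sub hlog).congr fun n => ?_
    rw [integral_sub (integrable_of_bounded μ hψ M hM)
      (integrable_of_bounded μ (trunc_meas hD n) n (abs_trunc_le_n D n))]
  have hle : ∀ n, (∫ x, (ψ x - trunc D n x) ∂μ)
      - Real.log (∫ x, Real.exp (D x + (ψ x - trunc D n x)) ∂P) ≤ r := fun n => by
    have := ha (fun x => ψ x - trunc D n x) (hψ.sub (trunc_meas hD n))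
      ⟨M + n, fun x => (abs_sub _ _).trans (add_le_add (hM x) (abs_trunc_le_n D n x))⟩
    rwa [hQint n] at this
  have hfin := le_of_tendsto' ht hle
  linarith

end Key

lemma relEntropy_nonneg {S : Type*} [MeasurableSpace S] (μ ν : Measure S)
    [IsProbabilityMeasure μ] [IsProbabilityMeasure ν] : (0 : EReal) ≤ relEntropy μ ν := by
  have h0 : (fun _ : S => (0 : ℝ)) ∈
      {φ : S → ℝ | Measurable φ ∧ ∃ M : ℝ, ∀ x, |φ x| ≤ M} :=
    ⟨measurable_const, 0, fun x => by simp⟩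
  have := le_biSup (f := fun φ : S → ℝ =>
    (((∫ x, φ x ∂μ) - Real.log (∫ x, Real.exp (φ x) ∂ν) : ℝ) : EReal)) h0
  simp at this; exact this


/-- if `dQ/dP = e^D` for a measurable `D` that is `μ`-integrable, then
`I(μ|Q) = I(μ|P) − ∫ D dμ` (as extended reals; in particular `I(μ|Q)` is finite iff
`I(μ|P)` is, and then the real equality holds). -/
theorem relEntropy_exponential_tilt {S : Type*} [MeasurableSpace S]
    (P Q μ : Measure S) [IsProbabilityMeasure P] [IsProbabilityMeasure Q]
    [IsProbabilityMeasure μ]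
    (D : S → ℝ) (hD : Measurable D)
    (hQP : Q = P.withDensity (fun x => ENNReal.ofReal (Real.exp (D x))))
    (hint : Integrable D μ) :
    relEntropy μ Q = relEntropy μ P - ((∫ x, D x ∂μ : ℝ) : EReal) := by
  set c : ℝ := ∫ x, D x ∂μ with hc
  refine le_antisymm ?_ ?_
  · by_cases hP : relEntropy μ P = ⊤
    · rw [hP, EReal.top_sub_coe]; exact le_top
    · have hPbot : relEntropy μ P ≠ ⊥ :=
        fun h => by simp [h] at hP; exact absurd (relEntropy_nonneg μ P) (by simp [h])
      have hPeq : relEntropy μ P = (((relEntropy μ P).toReal : ℝ) : EReal) :=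
        (EReal.coe_toReal hP hPbot).symm
      set r : ℝ := (relEntropy μ P).toReal with hr
      refine iSup₂_le fun φ hφ => ?_
      obtain ⟨hφm, M, hM⟩ := hφ
      have hb : ∀ ψ : S → ℝ, Measurable ψ → (∃ N : ℝ, ∀ x, |ψ x| ≤ N) →
          (∫ x, ψ x ∂μ) - Real.log (∫ x, Real.exp (ψ x) ∂P) ≤ r := by
        intro ψ hm hN
        have h1 : (((∫ x, ψ x ∂μ) - Real.log (∫ x, Real.exp (ψ x) ∂P) : ℝ) : EReal)
            ≤ relEntropy μ P := le_biSup (f := fun φ : S → ℝ =>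
              (((∫ x, φ x ∂μ) - Real.log (∫ x, Real.exp (φ x) ∂P) : ℝ) : EReal)) ⟨hm, hN⟩
        rw [hPeq] at h1
        exact_mod_cast h1
      have hkey := Key.key1 P Q μ hD hQP hint hφm hM hb
      calc (((∫ x, φ x ∂μ) - Real.log (∫ x, Real.exp (φ x) ∂Q) : ℝ) : EReal)
          ≤ ((r - c : ℝ) : EReal) := by exact_mod_cast (by linarith : (∫ x, φ x ∂μ) - Real.log (∫ x, Real.exp (φ x) ∂Q) ≤ r - c)
        _ = relEntropy μ P - (c : EReal) := by rw [EReal.coe_sub, ← hPeq]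
  · by_cases hQt : relEntropy μ Q = ⊤
    · rw [hQt]; exact le_top
    · have hQbot : relEntropy μ Q ≠ ⊥ :=
        fun h => absurd (relEntropy_nonneg μ Q) (by simp [h])
      have hQeq : relEntropy μ Q = (((relEntropy μ Q).toReal : ℝ) : EReal) :=
        (EReal.coe_toReal hQt hQbot).symm
      set r : ℝ := (relEntropy μ Q).toReal with hr
      have ha : ∀ φ : S → ℝ, Measurable φ → (∃ N : ℝ, ∀ x, |φ x| ≤ N) →
          (∫ x, φ x ∂μ) - Real.log (∫ x, Real.exp (φ x) ∂Q) ≤ r := by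
        intro φ hm hN
        have h1 : (((∫ x, φ x ∂μ) - Real.log (∫ x, Real.exp (φ x) ∂Q) : ℝ) : EReal)
            ≤ relEntropy μ Q := le_biSup (f := fun φ : S → ℝ =>
              (((∫ x, φ x ∂μ) - Real.log (∫ x, Real.exp (φ x) ∂Q) : ℝ) : EReal)) ⟨hm, hN⟩
        rw [hQeq] at h1
        exact_mod_cast h1
      have hP_le : relEntropy μ P ≤ ((r + c : ℝ) : EReal) := by
        refine iSup₂_le fun ψ hψ => ?_
        obtain ⟨hm, N, hN⟩ := hψ
        have hkey := Key.key2 P Q μ hD hQP hint hm hN ha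
        exact_mod_cast (by linarith : (∫ x, ψ x ∂μ) - Real.log (∫ x, Real.exp (ψ x) ∂P) ≤ r + c)
      calc relEntropy μ P - (c : EReal) ≤ ((r + c : ℝ) : EReal) - (c : EReal) :=
            EReal.sub_le_sub hP_le le_rfl
        _ = ((r : ℝ) : EReal) := by rw [← EReal.coe_sub]; norm_num
        _ = relEntropy μ Q := hQeq.symm
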